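/- Let (R, m) be a commutative noetherian local ring and M ≠ 0 a finitely generated R-module that is unmixed, i.e., Ass_R M = Assh_R M where Assh_R M is the set of primes p in Supp_R M with dim R/p = dim_R M. Then ldim_R M = dim_R M. -/

import Mathlib

open IsLocalRing CategoryTheory

/-- Krull dimension of a module: the Krull dimension of its support. -/
noncomputable def mdim (R : Type*) [CommRing R] (M : Type*) [AddCommGroup M] [Module R M] :
    WithBot ℕ∞ :=
  Order.krullDim (Module.support R M)

/-- The little dimension of a module over a local ring:
`ldim_R M = inf { dim_R (Rx) : x ∈ M \ mM }` (infimum over the empty set is `⊤`). -/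
noncomputable def ldim (R : Type*) [CommRing R] [IsLocalRing R] (M : Type*) [AddCommGroup M]
    [Module R M] : WithBot ℕ∞ :=
  ⨅ x : {x : M // x ∉ (maximalIdeal R • ⊤ : Submodule R M)},
    mdim R (Submodule.span R {x.1})

/-- Depth of a module over a local ring: the supremum of lengths of regular sequences on `M`
consisting of elements of the maximal ideal. -/
noncomputable def mdepth (R : Type*) [CommRing R] [IsLocalRing R] (M : Type*) [AddCommGroup M]
    [Module R M] : ℕ∞ :=
  sSup {n : ℕ∞ | ∃ rs : List R, (rs.length : ℕ∞) = n ∧ (∀ r ∈ rs, r ∈ maximalIdeal R) ∧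
    RingTheory.Sequence.IsRegular M rs}

/-- The quotient `R ⧸ I` has Krull dimension at most that of the zero locus of `I`. -/
lemma ringKrullDim_quotient_le_krullDim_zeroLocus {R : Type*} [CommRing R] (I : Ideal R) :
    ringKrullDim (R ⧸ I) ≤ Order.krullDim (PrimeSpectrum.zeroLocus (I : Set R)) := by
  refine Order.krullDim_le_of_strictMono
    (fun q => (⟨PrimeSpectrum.comap (Ideal.Quotient.mk I) q, by
      intro x hx
      have h0 : (Ideal.Quotient.mk I) x = 0 := Ideal.Quotient.eq_zero_iff_mem.mpr hx
      show x ∈ Ideal.comap (Ideal.Quotient.mk I) q.asIdeal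
      rw [Ideal.mem_comap, h0]
      exact q.asIdeal.zero_mem⟩ :
      PrimeSpectrum.zeroLocus (I : Set R))) ?_
  have hinj : Function.Injective (PrimeSpectrum.comap (Ideal.Quotient.mk I)) :=
    PrimeSpectrum.comap_injective_of_surjective _ Ideal.Quotient.mk_surjective
  have hmono : Monotone (fun q : PrimeSpectrum (R ⧸ I) =>
      (⟨PrimeSpectrum.comap (Ideal.Quotient.mk I) q, by
      intro x hx
      have h0 : (Ideal.Quotient.mk I) x = 0 := Ideal.Quotient.eq_zero_iff_mem.mpr hx
      show x ∈ Ideal.comap (Ideal.Quotient.mk I) q.asIdeal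
      rw [Ideal.mem_comap, h0]
      exact q.asIdeal.zero_mem⟩ :
      PrimeSpectrum.zeroLocus (I : Set R))) := by
    intro a b hab
    exact Ideal.comap_mono hab
  exact hmono.strictMono_of_injective (fun a b hab => hinj (congrArg Subtype.val hab))

lemma krullDim_le_of_subset {α : Type*} [Preorder α] {s t : Set α} (h : s ⊆ t) :
    Order.krullDim s ≤ Order.krullDim t :=
  Order.krullDim_le_of_strictMono (Set.inclusion h)
    (fun ⟨_, _⟩ ⟨_, _⟩ hab => by simpa [Set.inclusion] using hab)

/-- if a nonzero finitely generated module `M` is unmixed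
(`Ass_R M = Assh_R M`), then `ldim_R M = dim_R M`. -/
theorem stmt_5 (R : Type*) [CommRing R] [IsLocalRing R] [IsNoetherianRing R]
    (M : Type*) [AddCommGroup M] [Module R M] [Module.Finite R M] [Nontrivial M]
    (hunmixed : associatedPrimes R M =
      {p : Ideal R | ∃ hp : p.IsPrime, (⟨p, hp⟩ : PrimeSpectrum R) ∈ Module.support R M ∧
        ringKrullDim (R ⧸ p) = mdim R M}) :
    ldim R M = mdim R M := by
  -- the index type is nonempty by Nakayama
  have htop : (maximalIdeal R • ⊤ : Submodule R M) ≠ ⊤ := by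
    intro h
    have hbot : (⊤ : Submodule R M) = ⊥ :=
      Submodule.eq_bot_of_le_smul_of_le_jacobson_bot (maximalIdeal R) ⊤
        (Module.finite_def.mp inferInstance) (le_of_eq h.symm)
        (by rw [jacobson_eq_maximalIdeal ⊥ bot_ne_top])
    obtain ⟨x, hx⟩ := exists_ne (0 : M)
    exact hx ((Submodule.mem_bot R).mp (hbot ▸ Submodule.mem_top))
  have hne : Nonempty {x : M // x ∉ (maximalIdeal R • ⊤ : Submodule R M)} := by
    by_contra h
    push_neg at h
    exact htop (Submodule.eq_top_iff'.mpr fun x => not_not.mp fun hx => h.false ⟨x, hx⟩)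
  -- each term of the infimum equals `mdim R M`
  have key : ∀ x : {x : M // x ∉ (maximalIdeal R • ⊤ : Submodule R M)},
      mdim R (Submodule.span R {x.1}) = mdim R M := by
    rintro ⟨x, hx⟩
    have hx0 : x ≠ 0 := fun h => hx (h ▸ (Submodule.zero_mem _))
    haveI : Module.Finite R (Submodule.span R {x}) :=
      Module.Finite.iff_fg.mpr (IsNoetherian.noetherian _)
    apply le_antisymm
    · exact krullDim_le_of_subset
        (Module.support_subset_of_injective (Submodule.span R {x}).subtype
          Subtype.val_injective)
    · obtain ⟨P, hP, hle⟩ := exists_le_isAssociatedPrime_of_isNoetherianRing R (M := M) x hx0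
      have hPmem : P ∈ associatedPrimes R M := hP
      rw [hunmixed] at hPmem
      obtain ⟨hp, -, hdim⟩ := hPmem
      calc mdim R M = ringKrullDim (R ⧸ P) := hdim.symm
        _ ≤ Order.krullDim (PrimeSpectrum.zeroLocus (P : Set R)) :=
            ringKrullDim_quotient_le_krullDim_zeroLocus P
        _ ≤ mdim R (Submodule.span R {x}) := by
            rw [mdim, Module.support_eq_zeroLocus]
            exact krullDim_le_of_subset (PrimeSpectrum.zeroLocus_anti_mono
              (by rw [Submodule.bot_colon'] at hle; exact hle))
  rw [ldim, iInf_congr key, iInf_const]
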